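/- Under the hypotheses of the Taylor polynomial estimator lemma with ψ(t) = t^p for real p ≥ 2, μ > 0, |λ − μ| ≤ α μ for some 0 ≤ α < 1/2, and k + 1 > p, the bias satisfies |E[ϑ] − μ^p| ≤ (α/(1−α))^(k+1) · μ^p · (p/(k+1))^(⌊p⌋+1). In particular, if p is an integer, then E[ϑ] = μ^p. -/

import Mathlib

open MeasureTheory ProbabilityTheory

/-- Generalized binomial coefficient `C(p,j) = p(p-1)⋯(p-j+1)/j!`. -/
noncomputable def genBinom (p : ℝ) (j : ℕ) : ℝ :=
  (∏ i ∈ Finset.range j, (p - i)) / (Nat.factorial j)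

open Set

lemma prod_integral {Ω : Type*} [MeasurableSpace Ω] (P : Measure Ω) [IsProbabilityMeasure P]
    {k : ℕ} {Y : Fin k → Ω → ℝ}
    (hmeas : ∀ l, Measurable (Y l))
    (hindep : iIndepFun Y P)
    (hint : ∀ l, Integrable (Y l) P) (s : Finset (Fin k)) :
    Integrable (fun ω => ∏ l ∈ s, Y l ω) P ∧
      (∫ ω, ∏ l ∈ s, Y l ω ∂P) = ∏ l ∈ s, ∫ ω, Y l ω ∂P := by
  classical
  induction s using Finset.induction_on with
  | empty => simp [integrable_const]
  | insert a s ha ih =>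
    have hip : IndepFun (∏ j ∈ s, Y j) (Y a) P :=
      hindep.indepFun_finset_prod_of_notMem hmeas ha
    have hps : (∏ j ∈ s, Y j) = fun ω => ∏ j ∈ s, Y j ω := by
      funext ω; simp
    have h1 : Integrable (fun ω => (∏ j ∈ s, Y j ω) * Y a ω) P := by
      have := hip.integrable_mul (by rw [hps] at *; exact ih.1) (hint a)
      rw [hps] at this
      exact this
    constructor
    · simp only [Finset.prod_insert ha]
      simpa [mul_comm] using h1
    · simp only [Finset.prod_insert ha]
      have h2 := hip.integral_mul_eq_mul_integral (by rw [hps]; exact ih.1.aestronglyMeasurable) (hint a).aestronglyMeasurable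
      rw [hps] at h2
      -- shape
      calc (∫ ω, Y a ω * ∏ l ∈ s, Y l ω ∂P) = ∫ ω, (∏ l ∈ s, Y l ω) * Y a ω ∂P := by
            simp [mul_comm]
        _ = (∫ ω, ∏ l ∈ s, Y l ω ∂P) * ∫ ω, Y a ω ∂P := h2
        _ = (∫ ω, Y a ω ∂P) * ∏ l ∈ s, ∫ ω, Y l ω ∂P := by rw [ih.2]; ring

lemma iterderiv_rpow {a b p : ℝ} (h0 : 0 < a) (hab : a < b) (n : ℕ) :
    ∀ y ∈ Icc a b, iteratedDerivWithin n (fun t : ℝ => t ^ p) (Icc a b) y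
      = (∏ i ∈ Finset.range n, (p - i)) * y ^ (p - n) := by
  induction n with
  | zero => intro y hy; simp [iteratedDerivWithin_zero]
  | succ n ih =>
    intro y hy
    have hud : UniqueDiffOn ℝ (Icc a b) := uniqueDiffOn_Icc hab
    rw [iteratedDerivWithin_succ]
    rw [derivWithin_congr ih (ih y hy)]
    have hy0 : (0:ℝ) < y := lt_of_lt_of_le h0 hy.1
    have hd : HasDerivAt (fun t : ℝ => (∏ i ∈ Finset.range n, (p - i)) * t ^ (p - n))
        ((∏ i ∈ Finset.range n, (p - i)) * ((p - n) * y ^ (p - n - 1))) y :=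
      (Real.hasDerivAt_rpow_const (Or.inl hy0.ne')).const_mul _
    rw [hd.hasDerivWithinAt.derivWithin (hud y hy)]
    rw [Finset.prod_range_succ]
    push_cast
    rw [show p - (n+1) = p - n - 1 by ring]
    ring

lemma iterderiv_rpow_reflect {a b c p : ℝ} (h0 : 0 < c - b) (hab : a < b) (n : ℕ) :
    ∀ y ∈ Icc a b, iteratedDerivWithin n (fun t : ℝ => (c - t) ^ p) (Icc a b) y
      = (-1 : ℝ) ^ n * (∏ i ∈ Finset.range n, (p - i)) * (c - y) ^ (p - n) := by
  induction n with
  | zero => intro y hy; simp [iteratedDerivWithin_zero]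
  | succ n ih =>
    intro y hy
    have hud : UniqueDiffOn ℝ (Icc a b) := uniqueDiffOn_Icc hab
    rw [iteratedDerivWithin_succ]
    rw [derivWithin_congr ih (ih y hy)]
    have hy0 : (0:ℝ) < c - y := lt_of_lt_of_le h0 (by linarith [hy.2])
    have hdin : HasDerivAt (fun t : ℝ => c - t) (-1 : ℝ) y := by
      simpa using (hasDerivAt_id y).const_sub c
    have hd2 : HasDerivAt (fun t : ℝ => ((-1:ℝ)^n * ∏ i ∈ Finset.range n, (p - i)) * (c - t) ^ (p - n))
        (((-1:ℝ)^n * ∏ i ∈ Finset.range n, (p - i)) * (((p - n) * (c - y) ^ (p - n - 1)) * (-1))) y :=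
      (((Real.hasDerivAt_rpow_const (p := p - n) (Or.inl hy0.ne')).comp y hdin)).const_mul _
    rw [(by simpa [mul_assoc] using hd2 : HasDerivAt (fun t : ℝ => (-1:ℝ)^n * (∏ i ∈ Finset.range n, (p - i)) * (c - t) ^ (p - n))
        (((-1:ℝ)^n * ∏ i ∈ Finset.range n, (p - i)) * (((p - n) * (c - y) ^ (p - n - 1)) * (-1))) y).hasDerivWithinAt.derivWithin (hud y hy)]
    rw [Finset.prod_range_succ]
    push_cast
    rw [show p - (n+1) = p - n - 1 by ring, pow_succ]
    ring

lemma taylor_key (k : ℕ) (p lam mu α : ℝ) (hp : 2 ≤ p) (hmu : 0 < mu)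
    (hα0 : 0 ≤ α) (hα : α < 1/2) (hlam : |lam - mu| ≤ α * mu) (hk : p < k + 1) :
    |(∑ j ∈ Finset.range (k+1), genBinom p j * lam ^ (p - (j:ℝ)) * (mu - lam) ^ j) - mu ^ p|
      ≤ (∏ i ∈ Finset.range (k+1), |p - (i:ℝ)|) / (Nat.factorial (k+1))
        * (((1-α) * mu) ^ (p - ((k:ℝ)+1)) * (α * mu) ^ (k+1)) := by
  have habs := abs_le.1 hlam
  have hα1 : (0:ℝ) < 1 - α := by linarith
  have hlam1 : (1-α) * mu ≤ lam := by nlinarith [habs.1]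
  have hlam0 : 0 < lam := lt_of_lt_of_le (by positivity) hlam1
  have hmulam : mu - lam ≤ α * mu := by linarith [habs.1]
  have hlammu : lam - mu ≤ α * mu := habs.2
  have hamu : (0:ℝ) < (1-α) * mu := by positivity
  have hexp : p - ((k:ℝ)+1) ≤ 0 := by linarith
  have hA0 : (0:ℝ) ≤ ∏ i ∈ Finset.range (k+1), |p - (i:ℝ)| :=
    Finset.prod_nonneg fun i _ => abs_nonneg _
  have hRHS0 : (0:ℝ) ≤ (∏ i ∈ Finset.range (k+1), |p - (i:ℝ)|) / (Nat.factorial (k+1))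
        * (((1-α) * mu) ^ (p - ((k:ℝ)+1)) * (α * mu) ^ (k+1)) := by
    apply mul_nonneg (div_nonneg hA0 (by positivity))
    exact mul_nonneg (Real.rpow_nonneg hamu.le _) (by positivity)
  -- helper for the final bound in both nondegenerate cases
  have key : ∀ x' : ℝ, (1-α)*mu ≤ x' → 0 < x' → ∀ d : ℝ, |d| ≤ α * mu →
      |(∏ i ∈ Finset.range (k+1), (p - (i:ℝ))) * x' ^ (p - ((k:ℝ)+1)) * d ^ (k+1) / (Nat.factorial (k+1))|
        ≤ (∏ i ∈ Finset.range (k+1), |p - (i:ℝ)|) / (Nat.factorial (k+1))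
          * (((1-α) * mu) ^ (p - ((k:ℝ)+1)) * (α * mu) ^ (k+1)) := by
    intro x' hx1 hx0 d hd
    rw [abs_div, abs_mul, abs_mul, Finset.abs_prod, abs_pow]
    rw [Nat.abs_cast, abs_of_nonneg (Real.rpow_nonneg hx0.le _)]
    rw [div_mul_eq_mul_div, div_le_div_iff₀ (by positivity) (by positivity)]
    apply mul_le_mul_of_nonneg_right _ (by positivity)
    have h1 : x' ^ (p - ((k:ℝ)+1)) ≤ ((1-α)*mu) ^ (p - ((k:ℝ)+1)) :=
      Real.rpow_le_rpow_of_nonpos hamu hx1 hexp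
    have h2 : |d| ^ (k+1) ≤ (α * mu) ^ (k+1) :=
      pow_le_pow_left₀ (abs_nonneg d) hd _
    calc (∏ i ∈ Finset.range (k+1), |p - (i:ℝ)|) * x' ^ (p - ((k:ℝ)+1)) * |d| ^ (k+1)
        ≤ (∏ i ∈ Finset.range (k+1), |p - (i:ℝ)|) * ((1-α)*mu) ^ (p - ((k:ℝ)+1)) * (α*mu) ^ (k+1) := by
          apply mul_le_mul (mul_le_mul_of_nonneg_left h1 hA0) h2 (by positivity)
          exact mul_nonneg hA0 (Real.rpow_nonneg hamu.le _)
      _ = (∏ i ∈ Finset.range (k+1), |p - (i:ℝ)|) * (((1-α)*mu) ^ (p - ((k:ℝ)+1)) * (α*mu) ^ (k+1)) := by ring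
  rcases lt_trichotomy lam mu with hc | hc | hc
  · -- lam < mu : Taylor of t ^ p at lam
    have hcd : ContDiffOn ℝ k (fun t : ℝ => t ^ p) (Icc lam mu) := fun y hy =>
      (Real.contDiffAt_rpow_const_of_ne (ne_of_gt (lt_of_lt_of_le hlam0 hy.1))).contDiffWithinAt
    have hdiff : DifferentiableOn ℝ
        (iteratedDerivWithin k (fun t : ℝ => t ^ p) (Icc lam mu)) (Ioo lam mu) := by
      have hg : DifferentiableOn ℝ
          (fun t : ℝ => (∏ i ∈ Finset.range k, (p - (i:ℝ))) * t ^ (p - (k:ℝ))) (Ioo lam mu) :=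
        fun y hy => (((Real.hasDerivAt_rpow_const (p := p - (k:ℝ))
          (Or.inl (ne_of_gt (lt_of_lt_of_le hlam0 (le_of_lt hy.1))))).const_mul
          (∏ i ∈ Finset.range k, (p - (i:ℝ)))).differentiableAt).differentiableWithinAt
      exact hg.congr (fun y hy => iterderiv_rpow hlam0 hc k y (Ioo_subset_Icc_self hy))
    obtain ⟨x', hx', heq⟩ := taylor_mean_remainder_lagrange hc.ne
      (by rwa [Set.uIcc_of_le hc.le]) (by rwa [Set.uIcc_of_le hc.le, Set.uIoo_of_le hc.le])
    rw [Set.uIcc_of_le hc.le] at heq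
    rw [Set.uIoo_of_le hc.le] at hx'
    have htay : taylorWithinEval (fun t : ℝ => t ^ p) k (Icc lam mu) lam mu
        = ∑ j ∈ Finset.range (k+1), genBinom p j * lam ^ (p - (j:ℝ)) * (mu - lam) ^ j := by
      rw [taylor_within_apply]
      apply Finset.sum_congr rfl
      intro j hj
      rw [iterderiv_rpow hlam0 hc j lam (left_mem_Icc.2 hc.le)]
      rw [smul_eq_mul, genBinom]
      field_simp
    rw [htay] at heq
    have hiter := iterderiv_rpow (p := p) hlam0 hc (k+1) x' (Ioo_subset_Icc_self hx')
    push_cast at hiter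
    rw [hiter] at heq
    rw [abs_sub_comm, heq]
    have := key x' (le_trans hlam1 hx'.1.le) (lt_trans hlam0 hx'.1) (mu - lam)
      (by rw [abs_of_nonneg (by linarith)]; exact hmulam)
    exact this
  · -- lam = mu
    subst hc
    have hsum : (∑ j ∈ Finset.range (k+1), genBinom p j * lam ^ (p - (j:ℝ)) * (lam - lam) ^ j)
        = lam ^ p := by
      rw [Finset.sum_eq_single 0]
      · simp [genBinom]
      · intro j hj hne
        simp [sub_self, zero_pow hne]
      · intro h; exact absurd (Finset.mem_range.2 (Nat.succ_pos k)) h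
    rw [hsum, sub_self, abs_zero]
    exact hRHS0
  · -- mu < lam : Taylor of (lam + mu - t) ^ p at mu
    have hc0 : (0:ℝ) < lam + mu - lam := by linarith
    have hcd : ContDiffOn ℝ k (fun t : ℝ => (lam + mu - t) ^ p) (Icc mu lam) := by
      intro y hy
      have : (lam + mu - y) ≠ 0 := by
        have : mu ≤ lam + mu - y := by linarith [hy.2]
        linarith [lt_of_lt_of_le hmu this]
      exact ((Real.contDiffAt_rpow_const_of_ne this).comp y
        ((contDiff_const.sub contDiff_id).contDiffAt)).contDiffWithinAt
    have hdiff : DifferentiableOn ℝ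
        (iteratedDerivWithin k (fun t : ℝ => (lam + mu - t) ^ p) (Icc mu lam)) (Ioo mu lam) := by
      have hg : DifferentiableOn ℝ
          (fun t : ℝ => (-1:ℝ)^k * (∏ i ∈ Finset.range k, (p - (i:ℝ))) * (lam + mu - t) ^ (p - (k:ℝ))) (Ioo mu lam) := by
        intro y hy
        have hne : (lam + mu - y) ≠ 0 := by
          have h1 : mu < lam + mu - y := by linarith [hy.2]
          linarith [lt_trans hmu h1]
        have hdin : HasDerivAt (fun t : ℝ => lam + mu - t) (-1 : ℝ) y := by
          simpa using (hasDerivAt_id y).const_sub (lam + mu)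
        exact ((((Real.hasDerivAt_rpow_const (p := p - (k:ℝ)) (Or.inl hne)).comp y
          hdin).const_mul ((-1:ℝ)^k * ∏ i ∈ Finset.range k, (p - (i:ℝ)))).differentiableAt).differentiableWithinAt
      exact hg.congr (fun y hy => iterderiv_rpow_reflect hc0 hc k y (Ioo_subset_Icc_self hy))
    obtain ⟨x', hx', heq⟩ := taylor_mean_remainder_lagrange hc.ne
      (by rwa [Set.uIcc_of_le hc.le]) (by rwa [Set.uIcc_of_le hc.le, Set.uIoo_of_le hc.le])
    rw [Set.uIcc_of_le hc.le] at heq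
    rw [Set.uIoo_of_le hc.le] at hx'
    have hfx : (fun t : ℝ => (lam + mu - t) ^ p) lam = mu ^ p := by norm_num
    have htay : taylorWithinEval (fun t : ℝ => (lam + mu - t) ^ p) k (Icc mu lam) mu lam
        = ∑ j ∈ Finset.range (k+1), genBinom p j * lam ^ (p - (j:ℝ)) * (mu - lam) ^ j := by
      rw [taylor_within_apply]
      apply Finset.sum_congr rfl
      intro j hj
      rw [iterderiv_rpow_reflect hc0 hc j mu (left_mem_Icc.2 hc.le)]
      have hsimp : lam + mu - mu = lam := by ring
      rw [hsimp, smul_eq_mul, genBinom]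
      have hsign : (-1:ℝ)^j * (lam - mu) ^ j = (mu - lam) ^ j := by
        rw [← mul_pow]; congr 1; ring
      rw [← hsign]
      field_simp
    rw [show lam + mu - lam = mu by ring, htay] at heq
    have hiter := iterderiv_rpow_reflect (p := p) (c := lam + mu) hc0 hc (k+1) x' (Ioo_subset_Icc_self hx')
    push_cast at hiter
    rw [hiter] at heq
    rw [abs_sub_comm, heq]
    have hz0 : (0:ℝ) < lam + mu - x' := by linarith [hx'.2, hmu]
    have hz1 : (1-α) * mu ≤ lam + mu - x' := by nlinarith [hx'.2]
    have h := key (lam + mu - x') hz1 hz0 (lam - mu)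
      (by rw [abs_of_nonneg (by linarith)]; exact hlammu)
    calc |(-1:ℝ)^(k+1) * (∏ i ∈ Finset.range (k+1), (p - (i:ℝ))) * (lam + mu - x') ^ (p - ((k:ℝ)+1)) * (lam - mu) ^ (k+1) / (Nat.factorial (k+1))|
        = |(∏ i ∈ Finset.range (k+1), (p - (i:ℝ))) * (lam + mu - x') ^ (p - ((k:ℝ)+1)) * (lam - mu) ^ (k+1) / (Nat.factorial (k+1))| := by
          rw [show (-1:ℝ)^(k+1) * (∏ i ∈ Finset.range (k+1), (p - (i:ℝ))) * (lam + mu - x') ^ (p - ((k:ℝ)+1)) * (lam - mu) ^ (k+1) / (Nat.factorial (k+1))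
            = ((-1:ℝ)^(k+1)) * ((∏ i ∈ Finset.range (k+1), (p - (i:ℝ))) * (lam + mu - x') ^ (p - ((k:ℝ)+1)) * (lam - mu) ^ (k+1) / (Nat.factorial (k+1))) by ring]
          rw [abs_mul, abs_pow, abs_neg, abs_one, one_pow, one_mul]
      _ ≤ _ := h

lemma fact_prod_reflect (n : ℕ) : (∏ j ∈ Finset.range n, (n - j)) = Nat.factorial n := by
  rw [← Finset.prod_range_add_one_eq_factorial n, ← Finset.prod_range_reflect (fun j => j + 1) n]
  apply Finset.prod_congr rfl
  intro j hj
  have := Finset.mem_range.1 hj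
  omega

lemma fact_prod_reflect_real (n : ℕ) :
    (∏ j ∈ Finset.range n, ((n:ℝ) - j)) = Nat.factorial n := by
  rw [← fact_prod_reflect n]
  push_cast [Finset.prod_natCast]
  apply Finset.prod_congr rfl
  intro j hj
  have := Finset.mem_range.1 hj
  rw [Nat.cast_sub (by omega)]

lemma comb_bound (k : ℕ) (p : ℝ) (hp : 2 ≤ p) (hk : p < k + 1) :
    (∏ i ∈ Finset.range (k+1), |p - (i:ℝ)|)
      ≤ (p / (k+1))^(⌊p⌋₊+1) * (Nat.factorial (k+1)) := by
  have hp0 : (0:ℝ) ≤ p := by linarith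
  set m := ⌊p⌋₊ with hm
  have hm0 : (m:ℝ) ≤ p := Nat.floor_le hp0
  have hmp : p < (m:ℝ) + 1 := Nat.lt_floor_add_one p
  have hmk : m + 1 ≤ k + 1 := by
    have h1 : (m:ℝ) < (k:ℝ) + 1 := lt_of_le_of_lt hm0 hk
    have : m < k + 1 := by exact_mod_cast h1
    omega
  have hk1 : (0:ℝ) < (k:ℝ) + 1 := by positivity
  -- factorial as reflected product
  have hfact : ((Nat.factorial (k+1) : ℝ)) = ∏ i ∈ Finset.range (k+1), ((k:ℝ) + 1 - i) := by
    rw [← fact_prod_reflect_real (k+1)]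
    apply Finset.prod_congr rfl
    intro i _; push_cast; ring
  rw [hfact]
  rw [Finset.range_eq_Ico, ← Finset.prod_Ico_consecutive _ (Nat.zero_le (m+1)) hmk,
    ← Finset.prod_Ico_consecutive _ (Nat.zero_le (m+1)) hmk, ← Finset.range_eq_Ico]
  rw [show (p/((k:ℝ)+1))^(m+1) * ((∏ i ∈ Finset.range (m+1), ((k:ℝ)+1-i)) * ∏ i ∈ Finset.Ico (m+1) (k+1), ((k:ℝ)+1-i))
    = ((p/((k:ℝ)+1))^(m+1) * ∏ i ∈ Finset.range (m+1), ((k:ℝ)+1-i)) * (∏ i ∈ Finset.Ico (m+1) (k+1), ((k:ℝ)+1-i)) from by ring]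
  have hheadR0 : (0:ℝ) ≤ (p/((k:ℝ)+1))^(m+1) * ∏ i ∈ Finset.range (m+1), ((k:ℝ)+1-i) := by
    apply mul_nonneg (by positivity)
    apply Finset.prod_nonneg
    intro i hi
    have hi' := Finset.mem_range.1 hi
    have : (i:ℝ) ≤ k := by exact_mod_cast Nat.le_of_lt_succ (lt_of_lt_of_le hi' hmk)
    linarith
  have B1 : (∏ i ∈ Finset.range (m+1), |p - (i:ℝ)|)
      ≤ (p/((k:ℝ)+1))^(m+1) * ∏ i ∈ Finset.range (m+1), ((k:ℝ)+1-i) := by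
    rw [show (p/((k:ℝ)+1))^(m+1) = ∏ _i ∈ Finset.range (m+1), (p/((k:ℝ)+1)) by
      rw [Finset.prod_const, Finset.card_range]]
    rw [← Finset.prod_mul_distrib]
    apply Finset.prod_le_prod (fun i _ => abs_nonneg _)
    intro i hi
    have hi' : i ≤ m := Nat.le_of_lt_succ (Finset.mem_range.1 hi)
    have hip : (i:ℝ) ≤ p := le_trans (by exact_mod_cast hi') hm0
    rw [abs_of_nonneg (by linarith), div_mul_eq_mul_div, le_div_iff₀ hk1]
    have h2 : p * (i:ℝ) ≤ ((k:ℝ)+1) * i :=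
      mul_le_mul_of_nonneg_right hk.le (by positivity)
    ring_nf
    nlinarith
  have B2 : (∏ i ∈ Finset.Ico (m+1) (k+1), |p - (i:ℝ)|)
      ≤ ∏ i ∈ Finset.Ico (m+1) (k+1), ((k:ℝ)+1-i) := by
    have step1 : (∏ i ∈ Finset.Ico (m+1) (k+1), |p - (i:ℝ)|)
        ≤ ∏ i ∈ Finset.Ico (m+1) (k+1), ((i:ℝ) - m) := by
      apply Finset.prod_le_prod (fun i _ => abs_nonneg _)
      intro i hi
      have hi' : m + 1 ≤ i := (Finset.mem_Ico.1 hi).1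
      have hip : p ≤ (i:ℝ) := le_trans hmp.le (by exact_mod_cast hi')
      rw [abs_of_nonpos (by linarith)]
      linarith
    have step2 : (∏ i ∈ Finset.Ico (m+1) (k+1), ((i:ℝ) - m))
        = ∏ i ∈ Finset.Ico (m+1) (k+1), ((k:ℝ)+1-i) := by
      rw [Finset.prod_Ico_eq_prod_range, Finset.prod_Ico_eq_prod_range]
      have hkm : k + 1 - (m+1) = k - m := by omega
      rw [hkm]
      have hleft : (∏ j ∈ Finset.range (k-m), (((m+1+j:ℕ):ℝ) - m))
          = ∏ j ∈ Finset.range (k-m), ((j:ℝ) + 1) := by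
        apply Finset.prod_congr rfl; intro j _; push_cast; ring
      have hright : (∏ j ∈ Finset.range (k-m), ((k:ℝ)+1-((m+1+j:ℕ):ℝ)))
          = ∏ j ∈ Finset.range (k-m), (((k-m:ℕ):ℝ) - j) := by
        apply Finset.prod_congr rfl; intro j _
        rw [Nat.cast_sub (by omega)]; push_cast; ring
      rw [hleft, hright, fact_prod_reflect_real]
      have : (∏ j ∈ Finset.range (k-m), ((j:ℝ) + 1)) = Nat.factorial (k-m) := by
        rw [← Finset.prod_range_add_one_eq_factorial (k-m)]
        push_cast; rfl
      rw [this]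
    exact step1.trans_eq step2
  exact mul_le_mul B1 B2 (Finset.prod_nonneg fun i _ => abs_nonneg _) hheadR0

lemma card_filter_lt (k j : ℕ) (h : j ≤ k) :
    (Finset.univ.filter (fun l : Fin k => (l : ℕ) < j)).card = j := by
  rw [Finset.card_filter]
  simp [Fin.sum_univ_eq_sum_range (fun i => if i < j then 1 else 0)]
  rw [Finset.range_eq_Ico, Finset.Ico_filter_lt]
  simp [Nat.card_Ico]; omega

/-- Bias of the Taylor polynomial estimator for `ψ(t) = t^p`, `p ≥ 2`, `μ > 0`,
`|λ − μ| ≤ αμ` with `0 ≤ α < 1/2`, `k + 1 > p`: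
`|E[ϑ] − μ^p| ≤ (α/(1−α))^(k+1) μ^p (p/(k+1))^(⌊p⌋+1)`;
and if `p` is an integer then `E[ϑ] = μ^p`. -/
theorem stmt3 {Ω : Type*} [MeasurableSpace Ω] (P : Measure Ω) [IsProbabilityMeasure P]
    (k : ℕ) (X : Fin k → Ω → ℝ) (μ σ lam p α : ℝ)
    (hmeas : ∀ l, Measurable (X l))
    (hindep : iIndepFun X P)
    (hL2 : ∀ l, MemLp (X l) 2 P)
    (hmean : ∀ l, ∫ ω, X l ω ∂P = μ)
    (hvar : ∀ l, variance (X l) P ≤ σ ^ 2)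
    (hp : 2 ≤ p) (hμ : 0 < μ)
    (hα0 : 0 ≤ α) (hα : α < 1 / 2)
    (hlam : |lam - μ| ≤ α * μ)
    (hk : p < k + 1) :
    |(∫ ω, (∑ j ∈ Finset.range (k + 1),
        genBinom p j * lam ^ (p - j) *
          ∏ l ∈ Finset.univ.filter (fun l : Fin k => (l : ℕ) < j), (X l ω - lam)) ∂P)
      - μ ^ p|
      ≤ (α / (1 - α)) ^ (k + 1) * μ ^ p * (p / (k + 1)) ^ (⌊p⌋₊ + 1) ∧
    (∀ m : ℕ, p = m →
      (∫ ω, (∑ j ∈ Finset.range (k + 1),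
        genBinom p j * lam ^ (p - j) *
          ∏ l ∈ Finset.univ.filter (fun l : Fin k => (l : ℕ) < j), (X l ω - lam)) ∂P)
      = μ ^ p) := by
  classical
  set Y : Fin k → Ω → ℝ := fun l ω => X l ω - lam with hY
  have hYmeas : ∀ l, Measurable (Y l) := fun l => (hmeas l).sub measurable_const
  have hYint : ∀ l, Integrable (Y l) P := fun l =>
    ((hL2 l).integrable (by norm_num)).sub (integrable_const lam)
  have hYindep : iIndepFun Y P :=
    hindep.comp (fun _ x => x - lam) (fun _ => measurable_id.sub_const lam)
  have hYmean : ∀ l, (∫ ω, Y l ω ∂P) = μ - lam := by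
    intro l
    rw [hY]
    rw [integral_sub ((hL2 l).integrable (by norm_num)) (integrable_const lam)]
    simp [hmean l]
  have hprod := prod_integral P hYmeas hYindep hYint
  have hint_each : ∀ j ∈ Finset.range (k+1), Integrable (fun ω =>
      genBinom p j * lam ^ (p - (j:ℝ)) *
        ∏ l ∈ Finset.univ.filter (fun l : Fin k => (l : ℕ) < j), (X l ω - lam)) P := by
    intro j _
    exact ((hprod (Finset.univ.filter (fun l : Fin k => (l : ℕ) < j))).1).const_mul _
  have hI : (∫ ω, (∑ j ∈ Finset.range (k + 1),
        genBinom p j * lam ^ (p - j) *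
          ∏ l ∈ Finset.univ.filter (fun l : Fin k => (l : ℕ) < j), (X l ω - lam)) ∂P)
      = ∑ j ∈ Finset.range (k+1), genBinom p j * lam ^ (p - (j:ℝ)) * (μ - lam) ^ j := by
    rw [integral_finset_sum _ hint_each]
    apply Finset.sum_congr rfl
    intro j hj
    rw [integral_const_mul]
    rw [(hprod (Finset.univ.filter (fun l : Fin k => (l : ℕ) < j))).2]
    congr 1
    have hcard := card_filter_lt k j (Nat.le_of_lt_succ (Finset.mem_range.1 hj))
    calc (∏ l ∈ Finset.univ.filter (fun l : Fin k => (l : ℕ) < j), ∫ ω, X l ω - lam ∂P)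
        = ∏ l ∈ Finset.univ.filter (fun l : Fin k => (l : ℕ) < j), (μ - lam) :=
          Finset.prod_congr rfl (fun l _ => hYmean l)
      _ = (μ - lam) ^ j := by rw [Finset.prod_const, hcard]
  rw [hI]
  have hkey := taylor_key k p lam μ α hp hμ hα0 hα hlam hk
  constructor
  · -- main bound
    have hcomb := comb_bound k p hp hk
    have hfac : (0:ℝ) < (Nat.factorial (k+1) : ℝ) := by positivity
    have hα1 : (0:ℝ) < 1 - α := by linarith
    have hdiv : (∏ i ∈ Finset.range (k+1), |p - (i:ℝ)|) / (Nat.factorial (k+1))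
        ≤ (p / ((k:ℝ)+1))^(⌊p⌋₊+1) := by
      rw [div_le_iff₀ hfac]
      exact hcomb
    have hmid : (((1-α) * μ) ^ (p - ((k:ℝ)+1)) * (α * μ) ^ (k+1))
        ≤ (α / (1 - α)) ^ (k + 1) * μ ^ p := by
      have hKcast : ((k:ℝ)+1) = ((k+1:ℕ):ℝ) := by push_cast; ring
      have h1 : ((1-α)*μ) ^ (p - ((k:ℝ)+1))
          = (1-α)^p * μ^p / (((1-α)^(k+1)) * (μ^(k+1))) := by
        rw [Real.mul_rpow hα1.le hμ.le, hKcast, Real.rpow_sub hα1, Real.rpow_sub hμ,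
          Real.rpow_natCast, Real.rpow_natCast]
        rw [div_mul_div_comm]
      rw [h1, mul_pow]
      have hne1 : ((1-α):ℝ)^(k+1) ≠ 0 := by positivity
      have hne2 : μ^(k+1) ≠ 0 := by positivity
      have habs : ∀ a b c d e : ℝ, c ≠ 0 → d ≠ 0 → a * b / (c*d) * (e*d) = a * (e/c*b) := by
        intros a b c d e hc hd; field_simp
      have heq : (1-α)^p * μ^p / (((1-α)^(k+1)) * (μ^(k+1))) * (α^(k+1) * μ^(k+1))
          = (1-α)^p * ((α / (1-α))^(k+1) * μ^p) := by
        rw [div_pow]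
        exact habs _ _ _ _ _ hne1 hne2
      rw [heq]
      have hle1 : (1-α)^p ≤ 1 := Real.rpow_le_one (by linarith) (by linarith) (by linarith)
      have h0 : (0:ℝ) ≤ (α / (1-α))^(k+1) * μ^p := by
        apply mul_nonneg (by positivity) (Real.rpow_nonneg hμ.le p)
      nlinarith
    calc |(∑ j ∈ Finset.range (k+1), genBinom p j * lam ^ (p - (j:ℝ)) * (μ - lam) ^ j) - μ ^ p|
        ≤ (∏ i ∈ Finset.range (k+1), |p - (i:ℝ)|) / (Nat.factorial (k+1))
          * (((1-α) * μ) ^ (p - ((k:ℝ)+1)) * (α * μ) ^ (k+1)) := hkey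
      _ ≤ (p / ((k:ℝ)+1))^(⌊p⌋₊+1) * ((α / (1 - α)) ^ (k + 1) * μ ^ p) := by
          apply mul_le_mul hdiv hmid
          · apply mul_nonneg (Real.rpow_nonneg (by nlinarith) _) (by positivity)
          · positivity
      _ = (α / (1 - α)) ^ (k + 1) * μ ^ p * (p / ((k:ℝ)+1)) ^ (⌊p⌋₊ + 1) := by ring
  · -- integer case
    intro m hm
    have hmk : m < k + 1 := by
      have : (m:ℝ) < (k:ℝ) + 1 := by rw [← hm]; exact hk
      exact_mod_cast this
    have hA : (∏ i ∈ Finset.range (k+1), |p - (i:ℝ)|) = 0 :=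
      Finset.prod_eq_zero (Finset.mem_range.2 hmk) (by simp [hm])
    rw [hA] at hkey
    simp only [zero_div, zero_mul] at hkey
    have := le_antisymm hkey (abs_nonneg _)
    exact sub_eq_zero.1 (abs_eq_zero.1 this)
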